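/- arXiv:2312.11797 — 5 statements merged into one kernel-verified Lean document; each statement's English description precedes it below -/
import Mathlib

section
/- Let T > 0, r ∈ ℝ, γ > 0 with γ ≠ 1, λ ≥ 0, ρ ∈ (−1,1), and let μ, σ, m, ν : [0,T] × ℝ → ℝ be continuous functions with σ(t,x) > 0 for all (t,x). Suppose φ : [0,T] × ℝ → ℝ admits continuous partial derivatives ∂φ/∂t, φ_x, φ_{xx} and satisfies, for all (t,x) ∈ [0,T] × ℝ, ∂φ/∂t + (1−γ)r + m(t,x)φ_x + (1/2)ν(t,x)²(φ_{xx} + φ_x²) + ((1−γ)/(2γ))[(μ(t,x)−r)²/σ(t,x)² + 2ρ(μ(t,x)−r)ν(t,x)φ_x/σ(t,x) + ρ²ν(t,x)²φ_x²] = 0, with φ(T,x) = 0 for all x. Define V(t,w,x) = (w^{1−γ} exp(φ(t,x) − λ(1−γ)(T−t)/2) − 1)/(1−γ) for w > 0, where w^{1−γ} denotes the real power. Then for every t ∈ [0,T), w > 0, x ∈ ℝ: (i) the function u ↦ ∂V/∂t + (r + (μ(t,x)−r)u) w V_w + (1/2)σ(t,x)²(u² + λ/(γσ(t,x)²)) w²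 V_{ww} + m(t,x) V_x + (1/2)ν(t,x)² V_{xx} + ρ ν(t,x) σ(t,x) u w V_{wx} attains its supremum over u ∈ ℝ at u*(t,x) = (μ(t,x)−r)/(γσ(t,x)²) + ρν(t,x)φ_x(t,x)/(γσ(t,x)); (ii) this supremum equals 0; and (iii) V(T,w,x) = (w^{1−γ} − 1)/(1−γ). -/
open Real Set

/-- The expression inside the supremum of the exploratory HJB equation:
`u ↦ ∂V/∂t + (r + (μ−r)u) w V_w + (1/2)σ²(u² + λ/(γσ²)) w² V_ww + m V_x + (1/2)ν² V_xx
  + ρ ν σ u w V_wx`, with all partial derivatives expressed via `deriv`. -/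
noncomputable def HJBterm (V : ℝ → ℝ → ℝ → ℝ) (μ σ m ν : ℝ → ℝ → ℝ)
    (r γ lam ρ : ℝ) (t w x u : ℝ) : ℝ :=
  deriv (fun s => V s w x) t
    + (r + (μ t x - r) * u) * w * deriv (fun w' => V t w' x) w
    + (1/2) * (σ t x)^2 * (u^2 + lam / (γ * (σ t x)^2)) * w^2
        * deriv (fun w' => deriv (fun w'' => V t w'' x) w') w
    + m t x * deriv (fun y => V t w y) x
    + (1/2) * (ν t x)^2 * deriv (fun y => deriv (fun y' => V t w y') y) x
    + ρ * ν t x * σ t x * u * w * deriv (fun y => deriv (fun w' => V t w' y) w) x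


set_option maxHeartbeats 1000000 in
private lemma aux1 (γ s A P nu lam r ρ pt mm xx : ℝ)
    (hγ : γ ≠ 0) (hs : s ≠ 0) (h1γ : (1:ℝ) - γ ≠ 0) :
    ((pt + lam * (1 - γ) / 2) / (1 - γ)
        + (r + A * (A / (γ * s ^ 2) + ρ * nu * P / (γ * s)))
        - (γ / 2) * s ^ 2 * ((A / (γ * s ^ 2) + ρ * nu * P / (γ * s)) ^ 2 + lam / (γ * s ^ 2))
        + (mm * P + (1/2) * nu ^ 2 * (xx + P ^ 2)) / (1 - γ)
        + ρ * nu * s * (A / (γ * s ^ 2) + ρ * nu * P / (γ * s)) * P)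
      = (1 / (1 - γ)) * (pt + (1 - γ) * r + mm * P + (1/2) * nu ^ 2 * (xx + P ^ 2)
          + ((1 - γ) / (2 * γ)) *
              (A ^ 2 / s ^ 2 + 2 * ρ * A * nu * P / s + ρ ^ 2 * nu ^ 2 * P ^ 2)) := by
  field_simp
  ring

set_option maxHeartbeats 1000000 in
private lemma aux2 (γ s A P nu lam r ρ pt mm xx u : ℝ)
    (hγ : γ ≠ 0) (hs : s ≠ 0) (h1γ : (1:ℝ) - γ ≠ 0) :
    ((pt + lam * (1 - γ) / 2) / (1 - γ)
        + (r + A * (A / (γ * s ^ 2) + ρ * nu * P / (γ * s)))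
        - (γ / 2) * s ^ 2 * ((A / (γ * s ^ 2) + ρ * nu * P / (γ * s)) ^ 2 + lam / (γ * s ^ 2))
        + (mm * P + (1/2) * nu ^ 2 * (xx + P ^ 2)) / (1 - γ)
        + ρ * nu * s * (A / (γ * s ^ 2) + ρ * nu * P / (γ * s)) * P)
      - ((pt + lam * (1 - γ) / 2) / (1 - γ) + (r + A * u)
        - (γ / 2) * s ^ 2 * (u ^ 2 + lam / (γ * s ^ 2))
        + (mm * P + (1/2) * nu ^ 2 * (xx + P ^ 2)) / (1 - γ)
        + ρ * nu * s * u * P)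
      = (γ * s ^ 2 / 2) * ((A / (γ * s ^ 2) + ρ * nu * P / (γ * s)) - u) ^ 2 := by
  field_simp
  ring

/-- Theorem 1 (verification part): the function
`V(t,w,x) = (w^{1−γ} exp(φ(t,x) − λ(1−γ)(T−t)/2) − 1)/(1−γ)` built from a classical
solution `φ` of the reduced PDE solves the exploratory HJB equation, with the supremum
attained at `u*(t,x) = (μ−r)/(γσ²) + ρνφ_x/(γσ)`, and has the CRRA terminal condition. -/
theorem stmt0
    (T r γ lam ρ : ℝ) (hT : 0 < T) (hγ : 0 < γ) (hγ1 : γ ≠ 1) (hlam : 0 ≤ lam)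
    (hρ : ρ ∈ Set.Ioo (-1 : ℝ) 1)
    (μ σ m ν : ℝ → ℝ → ℝ)
    (hμc : ContinuousOn (fun p : ℝ × ℝ => μ p.1 p.2) (Set.Icc 0 T ×ˢ Set.univ))
    (hσc : ContinuousOn (fun p : ℝ × ℝ => σ p.1 p.2) (Set.Icc 0 T ×ˢ Set.univ))
    (hmc : ContinuousOn (fun p : ℝ × ℝ => m p.1 p.2) (Set.Icc 0 T ×ˢ Set.univ))
    (hνc : ContinuousOn (fun p : ℝ × ℝ => ν p.1 p.2) (Set.Icc 0 T ×ˢ Set.univ))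
    (hσpos : ∀ t x, 0 < σ t x)
    (φ φt φx φxx : ℝ → ℝ → ℝ)
    (hφt : ∀ t x, HasDerivAt (fun s => φ s x) (φt t x) t)
    (hφx : ∀ t x, HasDerivAt (fun y => φ t y) (φx t x) x)
    (hφxx : ∀ t x, HasDerivAt (fun y => φx t y) (φxx t x) x)
    (hφtc : Continuous (fun p : ℝ × ℝ => φt p.1 p.2))
    (hφxc : Continuous (fun p : ℝ × ℝ => φx p.1 p.2))
    (hφxxc : Continuous (fun p : ℝ × ℝ => φxx p.1 p.2))
    (hPDE : ∀ t ∈ Set.Icc 0 T, ∀ x : ℝ,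
      φt t x + (1 - γ) * r + m t x * φx t x
        + (1/2) * (ν t x)^2 * (φxx t x + (φx t x)^2)
        + ((1 - γ) / (2 * γ)) *
            ((μ t x - r)^2 / (σ t x)^2
              + 2 * ρ * (μ t x - r) * ν t x * φx t x / σ t x
              + ρ^2 * (ν t x)^2 * (φx t x)^2) = 0)
    (hterm : ∀ x : ℝ, φ T x = 0)
    (V : ℝ → ℝ → ℝ → ℝ)
    (hV : ∀ t w x, V t w x =
      (w ^ (1 - γ) * Real.exp (φ t x - lam * (1 - γ) * (T - t) / 2) - 1) / (1 - γ)) :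
    ∀ t ∈ Set.Ico 0 T, ∀ w : ℝ, 0 < w → ∀ x : ℝ,
      (∀ u : ℝ, HJBterm V μ σ m ν r γ lam ρ t w x u ≤
        HJBterm V μ σ m ν r γ lam ρ t w x
          ((μ t x - r) / (γ * (σ t x)^2) + ρ * ν t x * φx t x / (γ * σ t x))) ∧
      HJBterm V μ σ m ν r γ lam ρ t w x
          ((μ t x - r) / (γ * (σ t x)^2) + ρ * ν t x * φx t x / (γ * σ t x)) = 0 ∧
      V T w x = (w ^ (1 - γ) - 1) / (1 - γ) := by
  intro t ht w hw x
  have hγ0 : γ ≠ 0 := ne_of_gt hγ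
  have h1γ : (1:ℝ) - γ ≠ 0 := fun h => hγ1 (by linarith)
  have hs : (0:ℝ) < σ t x := hσpos t x
  have hsne : σ t x ≠ 0 := ne_of_gt hs
  have hwne : w ≠ 0 := ne_of_gt hw
  have hEpos : 0 < Real.exp (φ t x - lam * (1 - γ) * (T - t) / 2) := Real.exp_pos _
  -- derivative in t
  have hVt : deriv (fun s => V s w x) t
      = w ^ (1 - γ) * Real.exp (φ t x - lam * (1 - γ) * (T - t) / 2)
          * (φt t x + lam * (1 - γ) / 2) / (1 - γ) := by
    have h1 : HasDerivAt (fun s : ℝ => φ s x - lam * (1 - γ) * (T - s) / 2)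
        (φt t x + lam * (1 - γ) / 2) t := by
      have h2 : HasDerivAt (fun s : ℝ => lam * (1 - γ) * (T - s) / 2)
          (lam * (1 - γ) * (-1) / 2) t :=
        (((hasDerivAt_id t).const_sub T).const_mul (lam * (1 - γ))).div_const 2
      exact ((hφt t x).sub h2).congr_deriv (by ring)
    have h3 : (fun s => V s w x) = fun s =>
        (w ^ (1 - γ) * Real.exp (φ s x - lam * (1 - γ) * (T - s) / 2) - 1) / (1 - γ) := by
      funext s; rw [hV]
    rw [h3]
    rw [(((h1.exp).const_mul (w ^ (1 - γ))).sub_const 1 |>.div_const (1 - γ)).deriv]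
    ring
  -- derivative in w, general point and general x-argument
  have hdw : ∀ (y : ℝ) (w' : ℝ), 0 < w' → HasDerivAt (fun w'' => V t w'' y)
      (w' ^ ((1 - γ) - 1) * Real.exp (φ t y - lam * (1 - γ) * (T - t) / 2)) w' := by
    intro y w' hw'
    have h0 : (fun w'' => V t w'' y) = fun w'' : ℝ =>
        (w'' ^ (1 - γ) * Real.exp (φ t y - lam * (1 - γ) * (T - t) / 2) - 1) / (1 - γ) := by
      funext w''; rw [hV]
    rw [h0]
    have h1 : HasDerivAt (fun w'' : ℝ => w'' ^ (1 - γ))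
        ((1 - γ) * w' ^ ((1 - γ) - 1)) w' :=
      Real.hasDerivAt_rpow_const (Or.inl (ne_of_gt hw'))
    have h2 := ((h1.mul_const (Real.exp (φ t y - lam * (1 - γ) * (T - t) / 2))).sub_const 1
      |>.div_const (1 - γ))
    refine h2.congr_deriv ?_
    field_simp
  have hVw : deriv (fun w' => V t w' x) w
      = w ^ ((1 - γ) - 1) * Real.exp (φ t x - lam * (1 - γ) * (T - t) / 2) :=
    (hdw x w hw).deriv
  -- second derivative in w
  have hVww : deriv (fun w' => deriv (fun w'' => V t w'' x) w') w
      = ((1 - γ) - 1) * w ^ ((1 - γ) - 1 - 1)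
          * Real.exp (φ t x - lam * (1 - γ) * (T - t) / 2) := by
    have hEq : (fun w' => deriv (fun w'' => V t w'' x) w')
        =ᶠ[nhds w] fun w' => w' ^ ((1 - γ) - 1)
            * Real.exp (φ t x - lam * (1 - γ) * (T - t) / 2) := by
      filter_upwards [Ioi_mem_nhds hw] with w' hw'
      exact (hdw x w' hw').deriv
    rw [hEq.deriv_eq]
    rw [((Real.hasDerivAt_rpow_const (p := (1 - γ) - 1) (Or.inl hwne)).mul_const
      (Real.exp (φ t x - lam * (1 - γ) * (T - t) / 2))).deriv]
  -- derivative in x, general point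
  have hdx : ∀ y : ℝ, HasDerivAt (fun y' => V t w y')
      (w ^ (1 - γ) * Real.exp (φ t y - lam * (1 - γ) * (T - t) / 2) * φx t y / (1 - γ)) y := by
    intro y
    have h0 : (fun y' => V t w y') = fun y' =>
        (w ^ (1 - γ) * Real.exp (φ t y' - lam * (1 - γ) * (T - t) / 2) - 1) / (1 - γ) := by
      funext y'; rw [hV]
    rw [h0]
    have h1 := (((((hφx t y).sub_const (lam * (1 - γ) * (T - t) / 2)).exp).const_mul
      (w ^ (1 - γ))).sub_const 1).div_const (1 - γ)
    exact h1.congr_deriv (by ring)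
  have hVx : deriv (fun y => V t w y) x
      = w ^ (1 - γ) * Real.exp (φ t x - lam * (1 - γ) * (T - t) / 2) * φx t x / (1 - γ) :=
    (hdx x).deriv
  -- second derivative in x
  have hVxx : deriv (fun y => deriv (fun y' => V t w y') y) x
      = w ^ (1 - γ) * Real.exp (φ t x - lam * (1 - γ) * (T - t) / 2)
          * (φxx t x + (φx t x) ^ 2) / (1 - γ) := by
    have h0 : (fun y => deriv (fun y' => V t w y') y)
        = fun y => w ^ (1 - γ) * Real.exp (φ t y - lam * (1 - γ) * (T - t) / 2)
            * φx t y / (1 - γ) := by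
      funext y; exact (hdx y).deriv
    rw [h0]
    have h1 := (((((hφx t x).sub_const (lam * (1 - γ) * (T - t) / 2)).exp).const_mul
      (w ^ (1 - γ))).mul (hφxx t x)).div_const (1 - γ)
    refine h1.deriv.trans ?_
    ring
  -- mixed derivative
  have hVwx : deriv (fun y => deriv (fun w' => V t w' y) w) x
      = w ^ ((1 - γ) - 1) * Real.exp (φ t x - lam * (1 - γ) * (T - t) / 2) * φx t x := by
    have h0 : (fun y => deriv (fun w' => V t w' y) w)
        = fun y => w ^ ((1 - γ) - 1)
            * Real.exp (φ t y - lam * (1 - γ) * (T - t) / 2) := by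
      funext y; exact (hdw y w hw).deriv
    rw [h0]
    rw [((((hφx t x).sub_const (lam * (1 - γ) * (T - t) / 2)).exp).const_mul
      (w ^ ((1 - γ) - 1))).deriv]
    ring
  -- power identities
  have e1 : w ^ ((1 - γ) - 1) * w = w ^ (1 - γ) := by
    calc w ^ ((1 - γ) - 1) * w = w ^ ((1 - γ) - 1) * w ^ (1:ℝ) := by rw [Real.rpow_one]
      _ = w ^ ((1 - γ) - 1 + 1) := (Real.rpow_add hw _ _).symm
      _ = w ^ (1 - γ) := by congr 1; ring
  have e2 : w ^ ((1 - γ) - 1 - 1) * w ^ 2 = w ^ (1 - γ) := by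
    calc w ^ ((1 - γ) - 1 - 1) * w ^ 2
        = w ^ ((1 - γ) - 1 - 1) * w ^ ((2:ℕ):ℝ) := by rw [Real.rpow_natCast]
      _ = w ^ ((1 - γ) - 1 - 1 + 2) := by rw [← Real.rpow_add hw]; norm_num
      _ = w ^ (1 - γ) := by congr 1; ring
  -- closed form of HJBterm
  have key : ∀ u : ℝ, HJBterm V μ σ m ν r γ lam ρ t w x u
      = w ^ (1 - γ) * Real.exp (φ t x - lam * (1 - γ) * (T - t) / 2) *
        ((φt t x + lam * (1 - γ) / 2) / (1 - γ) + (r + (μ t x - r) * u)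
          - (γ / 2) * (σ t x) ^ 2 * (u ^ 2 + lam / (γ * (σ t x) ^ 2))
          + (m t x * φx t x + (1/2) * (ν t x) ^ 2 * (φxx t x + (φx t x) ^ 2)) / (1 - γ)
          + ρ * ν t x * σ t x * u * φx t x) := by
    intro u
    unfold HJBterm
    rw [hVt, hVw, hVww, hVx, hVxx, hVwx]
    linear_combination
      (((r + (μ t x - r) * u) + ρ * ν t x * σ t x * u * φx t x)
          * Real.exp (φ t x - lam * (1 - γ) * (T - t) / 2)) * e1
      + ((-(γ / 2)) * (σ t x) ^ 2 * (u ^ 2 + lam / (γ * (σ t x) ^ 2))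
          * Real.exp (φ t x - lam * (1 - γ) * (T - t) / 2)) * e2
  have hKpos : 0 < w ^ (1 - γ) * Real.exp (φ t x - lam * (1 - γ) * (T - t) / 2) :=
    mul_pos (Real.rpow_pos_of_pos hw _) hEpos
  set ust : ℝ := (μ t x - r) / (γ * (σ t x) ^ 2) + ρ * ν t x * φx t x / (γ * σ t x) with hust
  -- value at the maximizer is zero
  have hzero : HJBterm V μ σ m ν r γ lam ρ t w x ust = 0 := by
    rw [key ust]
    have hpde := hPDE t ⟨ht.1, ht.2.le⟩ x
    have hF : ((φt t x + lam * (1 - γ) / 2) / (1 - γ) + (r + (μ t x - r) * ust)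
          - (γ / 2) * (σ t x) ^ 2 * (ust ^ 2 + lam / (γ * (σ t x) ^ 2))
          + (m t x * φx t x + (1/2) * (ν t x) ^ 2 * (φxx t x + (φx t x) ^ 2)) / (1 - γ)
          + ρ * ν t x * σ t x * ust * φx t x)
        = (1 / (1 - γ)) * (φt t x + (1 - γ) * r + m t x * φx t x
            + (1/2) * (ν t x)^2 * (φxx t x + (φx t x)^2)
            + ((1 - γ) / (2 * γ)) *
                ((μ t x - r)^2 / (σ t x)^2
                  + 2 * ρ * (μ t x - r) * ν t x * φx t x / σ t x
                  + ρ^2 * (ν t x)^2 * (φx t x)^2)) := by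
      rw [hust]
      exact aux1 γ (σ t x) (μ t x - r) (φx t x) (ν t x) lam r ρ (φt t x) (m t x)
        (φxx t x) hγ0 hsne h1γ
    rw [hF, hpde, mul_zero, mul_zero]
  refine ⟨?_, hzero, ?_⟩
  · intro u
    rw [key u, key ust]
    have hdiff : ((φt t x + lam * (1 - γ) / 2) / (1 - γ) + (r + (μ t x - r) * ust)
          - (γ / 2) * (σ t x) ^ 2 * (ust ^ 2 + lam / (γ * (σ t x) ^ 2))
          + (m t x * φx t x + (1/2) * (ν t x) ^ 2 * (φxx t x + (φx t x) ^ 2)) / (1 - γ)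
          + ρ * ν t x * σ t x * ust * φx t x)
        - ((φt t x + lam * (1 - γ) / 2) / (1 - γ) + (r + (μ t x - r) * u)
          - (γ / 2) * (σ t x) ^ 2 * (u ^ 2 + lam / (γ * (σ t x) ^ 2))
          + (m t x * φx t x + (1/2) * (ν t x) ^ 2 * (φxx t x + (φx t x) ^ 2)) / (1 - γ)
          + ρ * ν t x * σ t x * u * φx t x)
        = (γ * (σ t x) ^ 2 / 2) * (ust - u) ^ 2 := by
      rw [hust]
      exact aux2 γ (σ t x) (μ t x - r) (φx t x) (ν t x) lam r ρ (φt t x) (m t x)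
        (φxx t x) u hγ0 hsne h1γ
    have hge : (0:ℝ) ≤ (γ * (σ t x) ^ 2 / 2) * (ust - u) ^ 2 := by positivity
    have h0 := hge
    rw [← hdiff] at h0
    exact mul_le_mul_of_nonneg_left (by linarith) hKpos.le
  · rw [hV T w x, hterm x]
    norm_num
end

section
/- Let ξ be a square-integrable real random variable on a probability space, and let θ, θ* ∈ ℝ, c > 0, ℓ ∈ (0, 1/c), β ≥ 0, ζ ≥ 0 be real numbers satisfying |E[ξ]| ≤ β and Var[ξ] = E[ξ²] − (E[ξ])² ≤ ζ. Then E[(θ − θ* + ℓ(c(θ*−θ) + ξ))²] ≤ (1 − ℓc)(1 − ℓc + ℓβ)(θ − θ*)² + ℓ(1 − ℓc)β + ℓ²(β² + ζ). -/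
open MeasureTheory ProbabilityTheory

/-- One-step mean-square error recursion in the proof of Theorem 4: for a
stochastic-approximation update `θ ↦ θ + ℓ(c(θ*−θ) + ξ)` with noise `ξ` of bias at most
`β` and variance at most `ζ`, the expected squared distance to `θ*` contracts as stated. -/
theorem stmt6 {Ω : Type*} [MeasureSpace Ω] [IsProbabilityMeasure (ℙ : Measure Ω)]
    (ξ : Ω → ℝ) (hξ : MemLp ξ 2 (ℙ : Measure Ω))
    (θ θs c ℓ β ζ : ℝ) (hc : 0 < c) (hℓ : ℓ ∈ Set.Ioo (0 : ℝ) (1 / c))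
    (hβ : 0 ≤ β) (hζ : 0 ≤ ζ)
    (hbias : |∫ ω, ξ ω| ≤ β)
    (hvar : (∫ ω, (ξ ω)^2) - (∫ ω, ξ ω)^2 ≤ ζ) :
    ∫ ω, (θ - θs + ℓ * (c * (θs - θ) + ξ ω))^2 ≤
      (1 - ℓ * c) * (1 - ℓ * c + ℓ * β) * (θ - θs)^2
        + ℓ * (1 - ℓ * c) * β + ℓ^2 * (β^2 + ζ) := by
  obtain ⟨hℓ0, hℓc⟩ := hℓ
  have hint : Integrable ξ ℙ := hξ.integrable (by norm_num)
  have hsq : Integrable (fun ω => (ξ ω) ^ 2) ℙ := by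
    have := hξ.integrable_sq
    simpa [sq] using this
  have hrw : ∀ ω : Ω, (θ - θs + ℓ * (c * (θs - θ) + ξ ω))^2 =
      ((θ - θs) * (1 - ℓ * c))^2 + (2 * (θ - θs) * (1 - ℓ * c) * ℓ) * ξ ω
        + ℓ^2 * (ξ ω)^2 := by intro ω; ring
  have hI : ∫ ω, (θ - θs + ℓ * (c * (θs - θ) + ξ ω))^2 =
      ((θ - θs) * (1 - ℓ * c))^2 + (2 * (θ - θs) * (1 - ℓ * c) * ℓ) * (∫ ω, ξ ω)
        + ℓ^2 * (∫ ω, (ξ ω)^2) := by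
    simp_rw [hrw]
    rw [integral_add (f := fun ω => ((θ - θs) * (1 - ℓ * c)) ^ 2
          + 2 * (θ - θs) * (1 - ℓ * c) * ℓ * ξ ω)
        ((integrable_const _).add (hint.const_mul _)) (hsq.const_mul _),
      integral_add (integrable_const _) (hint.const_mul _),
      integral_const, integral_const_mul, integral_const_mul]
    simp
  rw [hI]
  set m := ∫ ω, ξ ω with hm
  set s := ∫ ω, (ξ ω)^2 with hs
  have hd : 0 < 1 - ℓ * c := by
    have : ℓ * c < 1 := by
      rw [lt_div_iff₀ hc] at hℓc; linarith
    linarith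
  have habs : -β ≤ m ∧ m ≤ β := abs_le.mp hbias
  have hm2 : m^2 ≤ β^2 := sq_le_sq' habs.1 habs.2
  have hs2 : s ≤ ζ + β^2 := by linarith
  have hkey : 2 * (θ - θs) * m ≤ β * (θ - θs)^2 + β := by
    nlinarith [mul_nonneg (by linarith [habs.2] : (0:ℝ) ≤ β - m) (sq_nonneg (θ - θs + 1)),
      mul_nonneg (by linarith [habs.1] : (0:ℝ) ≤ β + m) (sq_nonneg (θ - θs - 1))]
  nlinarith [mul_le_mul_of_nonneg_left hkey (mul_nonneg hℓ0.le hd.le),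
    mul_le_mul_of_nonneg_left hs2 (sq_nonneg ℓ)]
end

section
/- Let w₀ > 0, μ, r ∈ ℝ, σ > 0, θ ∈ ℝ, γ > 0 with γ ≠ 1, and T > 0. Let Z be a Gaussian random variable with mean log w₀ + (r + (μ−r)θ − (1/2)σ²θ²)T and variance σ²θ²T. Set θ* = (μ−r)/(γσ²) and define V₀(w) = (w^{1−γ} exp((r + (μ−r)²/(2γσ²))(1−γ)T) − 1)/(1−γ) for w > 0. Then E[(exp((1−γ)Z) − 1)/(1−γ)] = V₀( w₀ · exp(−γTσ²(θ−θ*)²/2) ). Consequently, the number Δ < 1 satisfying E[(exp((1−γ)Z) − 1)/(1−γ)] = V₀(w₀(1−Δ)) is Δ = 1 − exp(−(Tγσ²/2)(θ−θ*)²), and it satisfies Δ ≤ (Tγσ²/2)(θ−θ*)². -/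
open MeasureTheory ProbabilityTheory Real
open scoped NNReal ENNReal

lemma gauss_pdf_exp_shift (m t : ℝ) (v : ℝ≥0) (hv : v ≠ 0) (x : ℝ) :
    gaussianPDFReal m v x * rexp (t * x)
      = rexp (t * m + (v : ℝ) * t ^ 2 / 2) * gaussianPDFReal (m + v * t) v x := by
  have hv' : (v : ℝ) ≠ 0 := by exact_mod_cast hv
  simp only [gaussianPDFReal]
  rw [mul_assoc, ← Real.exp_add, mul_left_comm, ← Real.exp_add]
  congr 1
  rw [Real.exp_eq_exp]
  field_simp
  ring

lemma integral_exp_gauss (m t : ℝ) (v : ℝ≥0) :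
    ∫ x, rexp (t * x) ∂(gaussianReal m v) = rexp (t * m + (v : ℝ) * t ^ 2 / 2) := by
  by_cases hv : v = 0
  · simp [hv, integral_dirac]
  · rw [gaussianReal_of_var_ne_zero _ hv, gaussianPDF_def]
    have hmeas : Measurable fun x => (gaussianPDFReal m v x).toNNReal :=
      (measurable_gaussianPDFReal m v).real_toNNReal
    simp only [ENNReal.ofReal]
    rw [integral_withDensity_eq_integral_smul hmeas]
    have : ∀ x : ℝ, (gaussianPDFReal m v x).toNNReal • rexp (t * x)
        = rexp (t * m + (v : ℝ) * t ^ 2 / 2) * gaussianPDFReal (m + v * t) v x := by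
      intro x
      rw [NNReal.smul_def, Real.coe_toNNReal _ (gaussianPDFReal_nonneg m v x)]
      exact gauss_pdf_exp_shift m t v hv x
    simp_rw [this]
    rw [integral_const_mul, integral_gaussianPDFReal_eq_one _ hv, mul_one]

lemma integrable_exp_gauss (m t : ℝ) (v : ℝ≥0) :
    Integrable (fun x => rexp (t * x)) (gaussianReal m v) := by
  by_cases hv : v = 0
  · simp only [hv, gaussianReal_zero_var]
    refine ⟨(measurable_exp.comp (measurable_const_mul t)).aestronglyMeasurable, ?_⟩
    rw [HasFiniteIntegral, lintegral_dirac]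
    exact ENNReal.coe_lt_top
  · rw [gaussianReal_of_var_ne_zero _ hv, gaussianPDF_def]
    have hmeas : Measurable fun x => (gaussianPDFReal m v x).toNNReal :=
      (measurable_gaussianPDFReal m v).real_toNNReal
    simp only [ENNReal.ofReal]
    rw [integrable_withDensity_iff_integrable_smul hmeas]
    have : ∀ x : ℝ, (gaussianPDFReal m v x).toNNReal • rexp (t * x)
        = rexp (t * m + (v : ℝ) * t ^ 2 / 2) * gaussianPDFReal (m + v * t) v x := by
      intro x
      rw [NNReal.smul_def, Real.coe_toNNReal _ (gaussianPDFReal_nonneg m v x)]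
      exact gauss_pdf_exp_shift m t v hv x
    simp_rw [this]
    exact (integrable_gaussianPDFReal _ _).const_mul _
/-- Lemma EC.1: in the Black–Scholes market, the expected CRRA utility of the lognormal
terminal wealth of the constant-fraction policy `θ` (with `log W_T` Gaussian with mean
`log w₀ + (r + (μ−r)θ − σ²θ²/2)T` and variance `σ²θ²T`) equals the optimal Merton value
`V₀` at the reduced initial wealth `w₀ exp(−γTσ²(θ−θ*)²/2)`; consequently the equivalent
relative wealth loss is `Δ = 1 − exp(−(Tγσ²/2)(θ−θ*)²) ≤ (Tγσ²/2)(θ−θ*)²`. -/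
theorem stmt7 (w₀ μ r σ θ γ T : ℝ) (hw₀ : 0 < w₀) (hσ : 0 < σ) (hγ : 0 < γ)
    (hγ1 : γ ≠ 1) (hT : 0 < T)
    (θs : ℝ) (hθs : θs = (μ - r) / (γ * σ^2))
    (V₀ : ℝ → ℝ)
    (hV₀ : ∀ w : ℝ, V₀ w =
      (w ^ (1 - γ) * Real.exp ((r + (μ - r)^2 / (2 * γ * σ^2)) * (1 - γ) * T) - 1) / (1 - γ))
    (Δb : ℝ) (hΔb : Δb = 1 - Real.exp (-(T * γ * σ^2 / 2) * (θ - θs)^2)) :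
    (∫ z, (Real.exp ((1 - γ) * z) - 1) / (1 - γ)
        ∂(gaussianReal (Real.log w₀ + (r + (μ - r) * θ - (1/2) * σ^2 * θ^2) * T)
            (σ^2 * θ^2 * T).toNNReal))
      = V₀ (w₀ * Real.exp (-(γ * T * σ^2 * (θ - θs)^2 / 2))) ∧
    Δb < 1 ∧
    (∫ z, (Real.exp ((1 - γ) * z) - 1) / (1 - γ)
        ∂(gaussianReal (Real.log w₀ + (r + (μ - r) * θ - (1/2) * σ^2 * θ^2) * T)
            (σ^2 * θ^2 * T).toNNReal))
      = V₀ (w₀ * (1 - Δb)) ∧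
    (∀ Δ : ℝ, Δ < 1 →
      (∫ z, (Real.exp ((1 - γ) * z) - 1) / (1 - γ)
          ∂(gaussianReal (Real.log w₀ + (r + (μ - r) * θ - (1/2) * σ^2 * θ^2) * T)
              (σ^2 * θ^2 * T).toNNReal))
        = V₀ (w₀ * (1 - Δ)) → Δ = Δb) ∧
    Δb ≤ (T * γ * σ^2 / 2) * (θ - θs)^2 := by
  have ht0 : (1 : ℝ) - γ ≠ 0 := sub_ne_zero.mpr (Ne.symm hγ1)
  set m := Real.log w₀ + (r + (μ - r) * θ - (1/2) * σ^2 * θ^2) * T with hm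
  have hvnn : (0:ℝ) ≤ σ^2 * θ^2 * T := by positivity
  have hvc : (((σ^2 * θ^2 * T).toNNReal : ℝ≥0) : ℝ) = σ^2 * θ^2 * T :=
    Real.coe_toNNReal _ hvnn
  -- value of the integral
  have hInt : (∫ z, (Real.exp ((1 - γ) * z) - 1) / (1 - γ)
        ∂(gaussianReal m (σ^2 * θ^2 * T).toNNReal))
      = (Real.exp ((1 - γ) * m + (σ^2 * θ^2 * T) * (1 - γ)^2 / 2) - 1) / (1 - γ) := by
    have h1 := integral_exp_gauss m (1 - γ) (σ^2 * θ^2 * T).toNNReal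
    rw [hvc] at h1
    rw [integral_div, integral_sub (integrable_exp_gauss m (1 - γ) _) (integrable_const 1),
      h1, integral_const]
    simp
  -- reduced wealth
  have hw' : (0:ℝ) < w₀ * Real.exp (-(γ * T * σ^2 * (θ - θs)^2 / 2)) := by positivity
  -- key exponent identity
  have hkey : (1 - γ) * m + (σ^2 * θ^2 * T) * (1 - γ)^2 / 2
      = Real.log (w₀ * Real.exp (-(γ * T * σ^2 * (θ - θs)^2 / 2))) * (1 - γ)
        + (r + (μ - r)^2 / (2 * γ * σ^2)) * (1 - γ) * T := by
    rw [Real.log_mul (ne_of_gt hw₀) (Real.exp_ne_zero _), Real.log_exp, hm, hθs]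
    have hγσ : γ * σ^2 ≠ 0 := by positivity
    field_simp
    ring
  have hA : (∫ z, (Real.exp ((1 - γ) * z) - 1) / (1 - γ)
        ∂(gaussianReal m (σ^2 * θ^2 * T).toNNReal))
      = V₀ (w₀ * Real.exp (-(γ * T * σ^2 * (θ - θs)^2 / 2))) := by
    rw [hInt, hV₀, Real.rpow_def_of_pos hw', ← Real.exp_add, hkey]
  have hΔb1 : Δb < 1 := by
    rw [hΔb]
    have := Real.exp_pos (-(T * γ * σ^2 / 2) * (θ - θs)^2)
    linarith
  have hwb : w₀ * (1 - Δb) = w₀ * Real.exp (-(γ * T * σ^2 * (θ - θs)^2 / 2)) := by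
    rw [hΔb]
    have hx : -(T * γ * σ^2 / 2) * (θ - θs)^2 = -(γ * T * σ^2 * (θ - θs)^2 / 2) := by ring
    rw [hx]; ring
  refine ⟨hA, hΔb1, by rw [hwb]; exact hA, ?_, ?_⟩
  · intro Δ hΔ hEq
    rw [hA, ← hwb] at hEq
    rw [hV₀, hV₀] at hEq
    have hKne : Real.exp ((r + (μ - r)^2 / (2 * γ * σ^2)) * (1 - γ) * T) ≠ 0 :=
      Real.exp_ne_zero _
    have ha : (0:ℝ) < w₀ * (1 - Δ) := mul_pos hw₀ (by linarith)
    have hb : (0:ℝ) < w₀ * (1 - Δb) := mul_pos hw₀ (by linarith)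
    have h2 : (w₀ * (1 - Δ)) ^ (1 - γ) = (w₀ * (1 - Δb)) ^ (1 - γ) := by
      have h3 := congrArg (fun y : ℝ => y * (1 - γ) + 1) hEq
      simp only [div_mul_cancel₀ _ ht0, sub_add_cancel] at h3
      exact mul_right_cancel₀ hKne h3.symm
    have h4 := congrArg Real.log h2
    rw [Real.log_rpow ha, Real.log_rpow hb] at h4
    have h5 : Real.log (w₀ * (1 - Δ)) = Real.log (w₀ * (1 - Δb)) :=
      mul_left_cancel₀ ht0 h4
    have h6 : w₀ * (1 - Δ) = w₀ * (1 - Δb) := by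
      rw [← Real.exp_log ha, ← Real.exp_log hb, h5]
    have h7 := mul_left_cancel₀ (ne_of_gt hw₀) h6
    linarith
  · rw [hΔb]
    have hx : -(T * γ * σ^2 / 2) * (θ - θs)^2 = -((T * γ * σ^2 / 2) * (θ - θs)^2) := by
      ring
    rw [hx]
    linarith [Real.add_one_le_exp (-((T * γ * σ^2 / 2) * (θ - θs)^2))]
end

section
/- Let γ > 0 with γ ≠ 1, ι ∈ ℝ, δ ∈ ℝ, ν̄ > 0, ρ ∈ (−1,1), T > 0, and assume D := ι²γ − (1−γ)(2ριδν̄ + δ²ν̄²) > 0. Set q = ν̄²(ρ² + γ(1−ρ²)) (which is positive), ψ₀ = −√(D/γ), ψ₁ = (1−γ)δ²/q, ψ₂ = (ιγ − (1−γ)δν̄ρ + √(γD))/q, ψ₃ = (ιγ − (1−γ)δν̄ρ − √(γD))/q, and define A₁(t) = ψ₁(e^{ψ₀(T−t)} − 1)/(−ψ₂ + ψ₃ e^{ψ₀(T−t)}). Assume −ψ₂ + ψ₃ e^{ψ₀(T−t)} ≠ 0 for all t ∈ [0,T]. Then A₁(T) = 0, and for every t ∈ [0,T] the function A₁ is differentiable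 at t with A₁′(t) − ι A₁(t) + (1/2)ν̄² A₁(t)² + ((1−γ)/(2γ))( δ² + 2ρδν̄ A₁(t) + ρ²ν̄² A₁(t)² ) = 0. -/
open Real

set_option maxHeartbeats 1000000 in
/-- Explicit solution (16) of the Riccati ODE (15) of Lemma 1: under the well-posedness
condition `D = ι²γ − (1−γ)(2ριδν̄ + δ²ν̄²) > 0`, the function
`A₁(t) = ψ₁(e^{ψ₀(T−t)} − 1)/(−ψ₂ + ψ₃ e^{ψ₀(T−t)})` satisfies `A₁(T) = 0` and
`A₁′ − ιA₁ + (1/2)ν̄²A₁² + ((1−γ)/(2γ))(δ² + 2ρδν̄A₁ + ρ²ν̄²A₁²) = 0` on `[0,T]`. -/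
theorem stmt14 (γ ι δ nubar ρ T : ℝ) (hγ : 0 < γ) (hγ1 : γ ≠ 1) (hnubar : 0 < nubar)
    (hρ : ρ ∈ Set.Ioo (-1 : ℝ) 1) (hT : 0 < T)
    (D : ℝ) (hD : D = ι^2 * γ - (1 - γ) * (2 * ρ * ι * δ * nubar + δ^2 * nubar^2))
    (hDpos : 0 < D)
    (q ψ₀ ψ₁ ψ₂ ψ₃ : ℝ)
    (hq : q = nubar^2 * (ρ^2 + γ * (1 - ρ^2)))
    (hψ₀ : ψ₀ = -Real.sqrt (D / γ))
    (hψ₁ : ψ₁ = (1 - γ) * δ^2 / q)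
    (hψ₂ : ψ₂ = (ι * γ - (1 - γ) * δ * nubar * ρ + Real.sqrt (γ * D)) / q)
    (hψ₃ : ψ₃ = (ι * γ - (1 - γ) * δ * nubar * ρ - Real.sqrt (γ * D)) / q)
    (A : ℝ → ℝ)
    (hA : ∀ t : ℝ, A t =
      ψ₁ * (Real.exp (ψ₀ * (T - t)) - 1) / (-ψ₂ + ψ₃ * Real.exp (ψ₀ * (T - t))))
    (hden : ∀ t ∈ Set.Icc (0 : ℝ) T, -ψ₂ + ψ₃ * Real.exp (ψ₀ * (T - t)) ≠ 0) :
    A T = 0 ∧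
    ∀ t ∈ Set.Icc (0 : ℝ) T, DifferentiableAt ℝ A t ∧
      deriv A t - ι * A t + (1/2) * nubar^2 * (A t)^2
        + ((1 - γ) / (2 * γ)) * (δ^2 + 2 * ρ * δ * nubar * A t + ρ^2 * nubar^2 * (A t)^2)
        = 0 := by
  have hρ2 : ρ^2 < 1 := by
    obtain ⟨h1, h2⟩ := hρ
    nlinarith
  have hq0 : 0 < q := by
    rw [hq]
    have h2 : 0 < ρ^2 + γ * (1 - ρ^2) := by nlinarith [sq_nonneg ρ]
    exact mul_pos (by positivity) h2
  have hγD : (0:ℝ) ≤ γ * D := by positivity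
  set s := Real.sqrt (γ * D) with hs
  have hs2 : s^2 = γ * D := Real.sq_sqrt hγD
  -- key identities
  have key0 : γ * ψ₀ = -s := by
    have h1 : γ * D = γ^2 * (D / γ) := by field_simp
    rw [hψ₀, hs, h1, Real.sqrt_mul (by positivity) (D/γ), Real.sqrt_sq hγ.le]
    ring
  have hb2 : (ι * γ - (1 - γ) * δ * nubar * ρ + s) * (ι * γ - (1 - γ) * δ * nubar * ρ - s)
      = (1 - γ) * δ^2 * q := by
    linear_combination (-1 : ℝ) * hs2 + (-γ) * hD + (-(1-γ)*δ^2) * hq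
  have key1 : ψ₂ * ψ₃ = ψ₁ := by
    rw [hψ₂, hψ₃, hψ₁]
    field_simp
    linear_combination hb2
  have key2 : 2 * γ * ψ₀ = -(q * (ψ₂ - ψ₃)) := by
    rw [hψ₂, hψ₃]
    field_simp
    linear_combination (2:ℝ) * key0
  have key3 : q * (ψ₂ + ψ₃) = 2 * (ι * γ - (1 - γ) * δ * nubar * ρ) := by
    rw [hψ₂, hψ₃]; field_simp; ring
  have key4 : (1 - γ) * δ^2 = ψ₁ * q := by
    rw [hψ₁]; field_simp
  refine ⟨by simp [hA], fun t ht => ?_⟩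
  have hdent := hden t ht
  set E := Real.exp (ψ₀ * (T - t)) with hE
  -- derivative
  have hderE : HasDerivAt (fun u : ℝ => Real.exp (ψ₀ * (T - u))) (-ψ₀ * E) t := by
    have h1 : HasDerivAt (fun u : ℝ => ψ₀ * (T - u)) (-ψ₀) t := by
      have := ((hasDerivAt_id t).const_sub T).const_mul ψ₀
      simpa using this
    simpa [hE, mul_comm] using h1.exp
  have hnum : HasDerivAt (fun u : ℝ => ψ₁ * (Real.exp (ψ₀ * (T - u)) - 1))
      (ψ₁ * (-ψ₀ * E)) t := ((hderE.sub_const 1).const_mul ψ₁)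
  have hdenf : HasDerivAt (fun u : ℝ => -ψ₂ + ψ₃ * Real.exp (ψ₀ * (T - u)))
      (ψ₃ * (-ψ₀ * E)) t := ((hderE.const_mul ψ₃).const_add (-ψ₂))
  have hAder : HasDerivAt A
      ((ψ₁ * (-ψ₀ * E) * (-ψ₂ + ψ₃ * E) - ψ₁ * (E - 1) * (ψ₃ * (-ψ₀ * E))) /
        (-ψ₂ + ψ₃ * E)^2) t := by
    have := (hnum.div hdenf hdent)
    have hfun : A = fun u : ℝ => ψ₁ * (Real.exp (ψ₀ * (T - u)) - 1) /
        (-ψ₂ + ψ₃ * Real.exp (ψ₀ * (T - u))) := funext hA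
    rw [hfun]
    simpa [hE, Pi.div_def] using this
  refine ⟨hAder.differentiableAt, ?_⟩
  rw [hAder.deriv, hA t, ← hE]
  have hdent' : -ψ₂ + E * ψ₃ ≠ 0 := by rwa [mul_comm]
  field_simp
  linear_combination
    (1 * ψ₁ * E * (ψ₂ - ψ₃)) * key2 +
    (1 * ψ₁ * (E - 1) * (-ψ₂ + ψ₃ * E)) * key3 +
    (-(1 * ψ₁^2 * (E - 1)^2)) * hq +
    (1 * (-ψ₂ + ψ₃ * E)^2) * key4 +
    (-(1 * q * ψ₁ * (E - 1)^2)) * key1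
end

section
/- Let γ > 0 with γ ≠ 1, ι ∈ ℝ, δ ∈ ℝ, ν̄ > 0, ρ ∈ (−1,1), T > 0, and assume D′ := (1−γ)(2ριδν̄ + δ²ν̄²) − ι²γ > 0. Set q = ν̄²(ρ² + γ(1−ρ²)) (which is positive), ψ₀ = (ιγ − (1−γ)δν̄ρ)/q, ψ₁ = √(γD′)/q, ψ₂ = √(D′)/(2√γ), and define A₁(t) = ψ₀ + ψ₁ tan( ψ₂(T−t) − arctan(ψ₀/ψ₁) ). Then A₁(T) = 0, and at every t ∈ [0,T] for which cos( ψ₂(T−t) − arctan(ψ₀/ψ₁) ) ≠ 0, the function A₁ is differentiable at t and satisfies A₁′(t) − ι A₁(t) + (1/2)ν̄² A₁(t)² + ((1−γ)/(2γ))( δ² + 2ρδν̄ A₁(t) + ρ²ν̄² A₁(t)² ) = 0. -/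
open Real

/-- Tangent-form (blow-up) solution (17) of the Riccati ODE (15): when the
well-posedness condition fails, i.e. `D′ = (1−γ)(2ριδν̄ + δ²ν̄²) − ι²γ > 0`, the function
`A₁(t) = ψ₀ + ψ₁ tan(ψ₂(T−t) − arctan(ψ₀/ψ₁))` satisfies `A₁(T) = 0` and the Riccati
equation at every `t ∈ [0,T]` where the cosine does not vanish. -/
theorem stmt15 (γ ι δ nubar ρ T : ℝ) (hγ : 0 < γ) (hγ1 : γ ≠ 1) (hnubar : 0 < nubar)
    (hρ : ρ ∈ Set.Ioo (-1 : ℝ) 1) (hT : 0 < T)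
    (D' : ℝ) (hD' : D' = (1 - γ) * (2 * ρ * ι * δ * nubar + δ^2 * nubar^2) - ι^2 * γ)
    (hD'pos : 0 < D')
    (q ψ₀ ψ₁ ψ₂ : ℝ)
    (hq : q = nubar^2 * (ρ^2 + γ * (1 - ρ^2)))
    (hψ₀ : ψ₀ = (ι * γ - (1 - γ) * δ * nubar * ρ) / q)
    (hψ₁ : ψ₁ = Real.sqrt (γ * D') / q)
    (hψ₂ : ψ₂ = Real.sqrt D' / (2 * Real.sqrt γ))
    (A : ℝ → ℝ)
    (hA : ∀ t : ℝ, A t =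
      ψ₀ + ψ₁ * Real.tan (ψ₂ * (T - t) - Real.arctan (ψ₀ / ψ₁))) :
    A T = 0 ∧
    ∀ t ∈ Set.Icc (0 : ℝ) T,
      Real.cos (ψ₂ * (T - t) - Real.arctan (ψ₀ / ψ₁)) ≠ 0 →
      DifferentiableAt ℝ A t ∧
      deriv A t - ι * A t + (1/2) * nubar^2 * (A t)^2
        + ((1 - γ) / (2 * γ)) * (δ^2 + 2 * ρ * δ * nubar * A t + ρ^2 * nubar^2 * (A t)^2)
        = 0 := by
  have hρ2 : ρ^2 < 1 := by
    obtain ⟨h1, h2⟩ := hρ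
    nlinarith
  have hfac : 0 < ρ^2 + γ * (1 - ρ^2) := by nlinarith [sq_nonneg ρ]
  have hqpos : 0 < q := by rw [hq]; positivity
  have hqne : q ≠ 0 := ne_of_gt hqpos
  have hγne : γ ≠ 0 := ne_of_gt hγ
  set g := Real.sqrt γ with hgdef
  set s := Real.sqrt D' with hsdef
  have hg2 : g^2 = γ := Real.sq_sqrt hγ.le
  have hs2 : s^2 = D' := Real.sq_sqrt hD'pos.le
  have hgpos : 0 < g := Real.sqrt_pos.mpr hγ
  have hspos : 0 < s := Real.sqrt_pos.mpr hD'pos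
  have hgne : g ≠ 0 := ne_of_gt hgpos
  have hsqrtmul : Real.sqrt (γ * D') = g * s := Real.sqrt_mul hγ.le D'
  have hψ₁' : ψ₁ = g * s / q := by rw [hψ₁, hsqrtmul]
  have hψ₂' : ψ₂ = s / (2 * g) := hψ₂
  have hψ₁pos : 0 < ψ₁ := by rw [hψ₁']; positivity
  have hψ₁ne : ψ₁ ≠ 0 := ne_of_gt hψ₁pos
  have hψ₁sq : ψ₁^2 = γ * D' / q^2 := by
    rw [hψ₁']; rw [div_pow, mul_pow, hg2, hs2]
  have hψ₁ψ₂ : ψ₁ * ψ₂ = D' / (2 * q) := by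
    rw [hψ₁', hψ₂']
    field_simp
    linear_combination hs2
  have hAT : A T = 0 := by
    rw [hA T]
    simp [Real.tan_neg, Real.tan_arctan, hψ₁ne, mul_div_assoc]
    field_simp
    ring
  refine ⟨hAT, ?_⟩
  intro t _ hcos
  set c := Real.arctan (ψ₀ / ψ₁) with hc
  have hinner : HasDerivAt (fun t : ℝ => ψ₂ * (T - t) - c) (-ψ₂) t := by
    have : HasDerivAt (fun t : ℝ => ψ₂ * (T - t) - c) (ψ₂ * (0 - 1) - 0) t :=
      (((hasDerivAt_const t T).sub (hasDerivAt_id t)).const_mul ψ₂).sub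
        (hasDerivAt_const t c)
    simpa using this
  have htan : HasDerivAt (fun t : ℝ => Real.tan (ψ₂ * (T - t) - c))
      ((1 / Real.cos (ψ₂ * (T - t) - c) ^ 2) * (-ψ₂)) t :=
    (Real.hasDerivAt_tan hcos).comp (h₂ := Real.tan) t hinner
  have hAderiv : HasDerivAt A
      (ψ₁ * ((1 / Real.cos (ψ₂ * (T - t) - c) ^ 2) * (-ψ₂))) t := by
    have h0 : HasDerivAt (fun t : ℝ => ψ₀ + ψ₁ * Real.tan (ψ₂ * (T - t) - c))
        (0 + ψ₁ * ((1 / Real.cos (ψ₂ * (T - t) - c) ^ 2) * (-ψ₂))) t :=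
      (hasDerivAt_const t ψ₀).add (htan.const_mul ψ₁)
    rw [zero_add] at h0
    exact h0.congr_of_eventuallyEq (Filter.Eventually.of_forall fun x => (hA x))
  refine ⟨hAderiv.differentiableAt, ?_⟩
  rw [hAderiv.deriv, hA t]
  set u := Real.tan (ψ₂ * (T - t) - c) with hu
  have hcos2 : (1 : ℝ) / Real.cos (ψ₂ * (T - t) - c) ^ 2 = 1 + u^2 := by
    rw [one_div, ← Real.inv_one_add_tan_sq hcos, inv_inv]
  rw [hcos2]
  -- coefficient identities
  have ha : (1/2) * nubar^2 + ((1 - γ) / (2 * γ)) * (ρ^2 * nubar^2) = q / (2 * γ) := by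
    rw [hq]; field_simp; ring
  have hC2 : ψ₁ * ψ₂ - q / (2 * γ) * ψ₁^2 = 0 := by
    rw [hψ₁ψ₂, hψ₁sq]; field_simp; ring
  have hC1 : q * ψ₀ / γ - ι + (1 - γ) * ρ * δ * nubar / γ = 0 := by
    rw [hψ₀]; field_simp; ring
  have hC0 : -(ψ₁ * ψ₂) - ι * ψ₀ + q / (2 * γ) * ψ₀^2
      + (1 - γ) * ρ * δ * nubar * ψ₀ / γ + (1 - γ) * δ^2 / (2 * γ) = 0 := by
    rw [hψ₁ψ₂, hψ₀, hD', hq]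
    field_simp
    ring
  linear_combination (ψ₀ + ψ₁ * u)^2 * ha - u^2 * hC2 + ψ₁ * u * hC1 + hC0
end
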